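/- Suppose r, θ : ℝ → ℝ are twice differentiable with r(t) > 0 and satisfy r'' − r·θ'² = 0 and r·θ'' + 2·r'·θ' = sin(θ)/r³. Then I(t) = (1/2)(r(t)²·θ'(t))² + cos(θ(t)) is constant. -/

import Mathlib

/-- for planar motion under the curl force `F = (sin θ / r³) e_θ`,
`I(t) = (1/2)(r² θ')² + cos θ` is constant. -/
theorem lrr_invariant_sin_force
    (r θ : ℝ → ℝ)
    (hr : ContDiff ℝ 2 r) (hθ : ContDiff ℝ 2 θ)
    (hrpos : ∀ t, 0 < r t)
    (hrad : ∀ t, deriv (deriv r) t - r t * (deriv θ t) ^ 2 = 0)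
    (hang : ∀ t, r t * deriv (deriv θ) t + 2 * deriv r t * deriv θ t
      = Real.sin (θ t) / (r t) ^ 3) :
    ∀ t₁ t₂ : ℝ,
      (1/2) * ((r t₁) ^ 2 * deriv θ t₁) ^ 2 + Real.cos (θ t₁)
        = (1/2) * ((r t₂) ^ 2 * deriv θ t₂) ^ 2 + Real.cos (θ t₂) := by
  have hr1 : Differentiable ℝ r := hr.differentiable (by norm_num)
  have hθ1 : Differentiable ℝ θ := hθ.differentiable (by norm_num)
  have hθ2 : ContDiff ℝ 1 (deriv θ) :=
    (contDiff_succ_iff_deriv.mp (show ContDiff ℝ (1 + 1) θ by exact_mod_cast hθ)).2.2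
  have hθ1' : Differentiable ℝ (deriv θ) := hθ2.differentiable (by norm_num)
  set I : ℝ → ℝ := fun t => (1/2) * ((r t) ^ 2 * deriv θ t) ^ 2 + Real.cos (θ t) with hI
  have key : ∀ t, HasDerivAt I 0 t := by
    intro t
    have hrt : HasDerivAt r (deriv r t) t := (hr1 t).hasDerivAt
    have hθt : HasDerivAt θ (deriv θ t) t := (hθ1 t).hasDerivAt
    have hθ't : HasDerivAt (deriv θ) (deriv (deriv θ) t) t := (hθ1' t).hasDerivAt
    have hf : HasDerivAt (fun t => (r t) ^ 2 * deriv θ t)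
        ((2 * r t ^ 1 * deriv r t) * deriv θ t + (r t) ^ 2 * deriv (deriv θ) t) t :=
      (hrt.pow 2).mul hθ't
    have hcos : HasDerivAt (fun t => Real.cos (θ t)) (-Real.sin (θ t) * deriv θ t) t :=
      (Real.hasDerivAt_cos (θ t)).comp t hθt
    have hsq : HasDerivAt (fun t => (1/2) * ((r t) ^ 2 * deriv θ t) ^ 2)
        ((1/2) * (2 * ((r t) ^ 2 * deriv θ t) ^ 1 *
          ((2 * r t ^ 1 * deriv r t) * deriv θ t + (r t) ^ 2 * deriv (deriv θ) t))) t :=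
      (hf.pow 2).const_mul (1/2)
    have h := hsq.add hcos
    refine h.congr_deriv ?_
    symm
    have hang' := hang t
    have hrpos' := (hrpos t).ne'
    rw [eq_div_iff (by positivity : (r t) ^ 3 ≠ 0)] at hang'
    linear_combination (-(deriv θ t)) * hang'
  intro t₁ t₂
  have : I t₁ = I t₂ := by
    have := is_const_of_deriv_eq_zero (fun t => (key t).differentiableAt)
      (fun t => (key t).deriv) t₁ t₂
    exact this
  simpa [hI] using this
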